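/- Let 0 ≤ β ≤ α ≤ 1. For every (j,m,ℓ) ∈ I₀ and every j' ∈ ℕ, the set {m' ∈ ℕ₀ : there exists ℓ' ∈ ℕ₀ such that (j',m',ℓ') ∈ I₀ and Q_{j,m,ℓ} ∩ Q_{j',m',ℓ'} ≠ ∅} has at most 5 elements. -/

import Mathlib

set_option maxHeartbeats 1000000


noncomputable section

open Real Set MeasureTheory Pointwise
open scoped ENNReal

/-- `ℝ²` with the Euclidean norm. -/
abbrev R2 : Type := EuclideanSpace ℝ (Fin 2)

/-- The vector `(a, b) ∈ ℝ²`. -/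
def vec2 (a b : ℝ) : R2 := (EuclideanSpace.equiv (Fin 2) ℝ).symm ![a, b]

/-- Action of a `2×2` matrix on `ℝ²`. -/
def mulV (M : Matrix (Fin 2) (Fin 2) ℝ) (x : R2) : R2 :=
  (EuclideanSpace.equiv (Fin 2) ℝ).symm (M.mulVec ((EuclideanSpace.equiv (Fin 2) ℝ) x))

/-- Rotation matrix through the angle `θ`. -/
def Rmat (θ : ℝ) : Matrix (Fin 2) (Fin 2) ℝ :=
  !![Real.cos θ, -Real.sin θ; Real.sin θ, Real.cos θ]

/-- The diagonal matrix `A_j = diag(2^{αj}, 2^{βj})`. -/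
def Amat (α β : ℝ) (j : ℕ) : Matrix (Fin 2) (Fin 2) ℝ :=
  !![(2:ℝ) ^ (α * (j:ℝ)), 0; 0, (2:ℝ) ^ (β * (j:ℝ))]

/-- The angle `Θ_{j,ℓ} = 2ℓ·(π/N)·2^{(β − 1)j}`, with `N = 10`. -/
def Theta (β : ℝ) (j ℓ : ℕ) : ℝ :=
  2 * (ℓ:ℝ) * (Real.pi / 10) * (2:ℝ) ^ ((β - 1) * (j:ℝ))

/-- The translation `c_{j,m} = (2^{j−1} + m·2^{αj}, 0)ᵗ`. -/
def cvec (α : ℝ) (j m : ℕ) : R2 :=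
  vec2 ((2:ℝ) ^ ((j:ℝ) - 1) + (m:ℝ) * (2:ℝ) ^ (α * (j:ℝ))) 0

/-- The base set `Q = (−ε, 1+ε) × (−1−ε, 1+ε)`. -/
def baseQ (ε : ℝ) : Set R2 :=
  {x : R2 | x 0 ∈ Set.Ioo (-ε) (1+ε) ∧ x 1 ∈ Set.Ioo (-1-ε) (1+ε)}

/-- `m_j^max = ⌈2^{(1−α)j−1}⌉`. -/
def mjmax (α : ℝ) (j : ℕ) : ℤ := ⌈(2:ℝ) ^ ((1-α) * (j:ℝ) - 1)⌉

/-- `ℓ_j^max = ⌈N·2^{(1−β)j}⌉`, with `N = 10`. -/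
def ljmax (β : ℝ) (j : ℕ) : ℤ := ⌈(10:ℝ) * (2:ℝ) ^ ((1-β) * (j:ℝ))⌉

/-- Membership of a triple `(j,m,ℓ)` in the index set
`I₀ = {(j,m,ℓ) ∈ ℕ × ℕ₀ × ℕ₀ : m ≤ m_j^max, ℓ ≤ ℓ_j^max}` (with `ℕ = {1,2,…}`). -/
def memI0 (α β : ℝ) (i : ℕ × ℕ × ℕ) : Prop :=
  1 ≤ i.1 ∧ (i.2.1 : ℤ) ≤ mjmax α i.1 ∧ (i.2.2 : ℤ) ≤ ljmax β i.1

/-- The set `Q_{j,m,ℓ} = R_{j,ℓ}(A_j·Q + c_{j,m})`. -/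
def Qset (α β ε : ℝ) (j m ℓ : ℕ) : Set R2 :=
  (fun x => mulV (Rmat (Theta β j ℓ)) (mulV (Amat α β j) x + cvec α j m)) '' baseQ ε

lemma mulV_apply (M : Matrix (Fin 2) (Fin 2) ℝ) (x : R2) (i : Fin 2) :
    mulV M x i = M i 0 * x 0 + M i 1 * x 1 := by
  simp [mulV, Matrix.mulVec, dotProduct, Fin.sum_univ_two, EuclideanSpace.equiv]
  fin_cases i <;> rfl

lemma vec2_apply0 (a b : ℝ) : vec2 a b 0 = a := by simp [vec2, EuclideanSpace.equiv]
lemma vec2_apply1 (a b : ℝ) : vec2 a b 1 = b := by simp [vec2, EuclideanSpace.equiv]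

lemma add_apply2 (x y : R2) (i : Fin 2) : (x + y) i = x i + y i := rfl

lemma norm_R2 (x : R2) : ‖x‖ = Real.sqrt (x 0 ^ 2 + x 1 ^ 2) := by
  rw [EuclideanSpace.norm_eq]
  simp [Fin.sum_univ_two, sq_abs]

lemma norm_mulV_Rmat (θ : ℝ) (y : R2) : ‖mulV (Rmat θ) y‖ = ‖y‖ := by
  rw [norm_R2, norm_R2, mulV_apply, mulV_apply]
  have h00 : Rmat θ 0 0 = Real.cos θ := rfl
  have h01 : Rmat θ 0 1 = -Real.sin θ := rfl
  have h10 : Rmat θ 1 0 = Real.sin θ := rfl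
  have h11 : Rmat θ 1 1 = Real.cos θ := rfl
  rw [h00, h01, h10, h11]
  congr 1
  have := Real.sin_sq_add_cos_sq θ
  nlinarith [this]

/-- Norm bounds for points of a wave packet. -/
lemma rpow_add_two (a b : ℝ) : (2:ℝ)^(a+b) = (2:ℝ)^a * (2:ℝ)^b :=
  Real.rpow_add two_pos a b

lemma norm_mem {α β ε : ℝ} (hβ0 : 0 ≤ β) (hβα : β ≤ α) (hα1 : α ≤ 1)
    (hε0 : 0 < ε) (hε1 : ε < 1/32) {j m ℓ : ℕ} (hj : 1 ≤ j)
    {p : R2} (hp : p ∈ Qset α β ε j m ℓ) :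
    (2:ℝ)^((j:ℝ)-1) + ((m:ℝ) - ε) * (2:ℝ)^(α*(j:ℝ)) ≤ ‖p‖ ∧
    ‖p‖ ≤ (2:ℝ)^((j:ℝ)-1) + ((m:ℝ) + 1 + ε) * (2:ℝ)^(α*(j:ℝ))
            + (16/15) * (1+ε)^2 * (2:ℝ)^((2*β-1)*(j:ℝ)) := by
  obtain ⟨x, ⟨hx0, hx1⟩, rfl⟩ := hp
  rw [norm_mulV_Rmat, norm_R2]
  set Pa := (2:ℝ)^(α*(j:ℝ)) with hPadef
  set Pb := (2:ℝ)^(β*(j:ℝ)) with hPbdef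
  set Pj := (2:ℝ)^((j:ℝ)-1) with hPjdef
  set Q := (2:ℝ)^((2*β-1)*(j:ℝ)) with hQdef
  have hPa : 0 < Pa := Real.rpow_pos_of_pos two_pos _
  have hPb : 0 < Pb := Real.rpow_pos_of_pos two_pos _
  have hPj : 0 < Pj := Real.rpow_pos_of_pos two_pos _
  have hQ : 0 < Q := Real.rpow_pos_of_pos two_pos _
  have hj1 : (1:ℝ) ≤ (j:ℝ) := by exact_mod_cast hj
  set u := (mulV (Amat α β j) x + cvec α j m) 0 with hudef
  set v := (mulV (Amat α β j) x + cvec α j m) 1 with hvdef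
  have hA00 : Amat α β j 0 0 = Pa := rfl
  have hA01 : Amat α β j 0 1 = 0 := rfl
  have hA10 : Amat α β j 1 0 = 0 := rfl
  have hA11 : Amat α β j 1 1 = Pb := rfl
  have hu_eq : u = Pa * x 0 + (Pj + (m:ℝ) * Pa) := by
    rw [hudef, add_apply2, mulV_apply, hA00, hA01]
    rw [show cvec α j m 0 = Pj + (m:ℝ) * Pa from vec2_apply0 _ _]
    ring
  have hv_eq : v = Pb * x 1 := by
    rw [hvdef, add_apply2, mulV_apply, hA10, hA11]
    rw [show cvec α j m 1 = 0 from vec2_apply1 _ _]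
    ring
  clear hudef hvdef
  clear_value u v
  obtain ⟨hx0l, hx0r⟩ := hx0
  obtain ⟨hx1l, hx1r⟩ := hx1
  have hu_lo : Pj + ((m:ℝ) - ε) * Pa ≤ u := by
    rw [hu_eq]
    nlinarith [mul_le_mul_of_nonneg_left hx0l.le hPa.le]
  have hu_hi : u ≤ Pj + ((m:ℝ) + 1 + ε) * Pa := by
    rw [hu_eq]
    nlinarith [mul_le_mul_of_nonneg_left hx0r.le hPa.le]
  -- 2^{α j} ≤ 2^j = 2 * 2^{j-1}
  have hPa2 : Pa ≤ 2 * Pj := by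
    have h1 : Pa ≤ (2:ℝ)^((j:ℝ)) :=
      Real.rpow_le_rpow_of_exponent_le one_le_two (by nlinarith)
    have h2 : (2:ℝ)^((j:ℝ)) = 2 * Pj := by
      rw [hPjdef, show (2:ℝ) * (2:ℝ)^((j:ℝ)-1) = (2:ℝ)^(1:ℝ) * (2:ℝ)^((j:ℝ)-1) by
        rw [Real.rpow_one], ← rpow_add_two]
      congr 1
      ring
    linarith
  have hm0 : (0:ℝ) ≤ (m:ℝ) := Nat.cast_nonneg m
  have hu_big : (15/16) * Pj ≤ u := by
    have e1 : ε * Pa ≤ ε * (2 * Pj) := mul_le_mul_of_nonneg_left hPa2 hε0.le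
    have e2 : ε * (2 * Pj) ≤ (1/32) * (2 * Pj) :=
      mul_le_mul_of_nonneg_right hε1.le (by positivity)
    nlinarith [mul_nonneg hm0 hPa.le]
  have hu_pos : 0 < u := by linarith
  have hv_sq : v^2 ≤ (1+ε)^2 * (Pb * Pb) := by
    rw [hv_eq]
    have h1 : |x 1| ≤ 1 + ε := abs_le.mpr ⟨by linarith, by linarith⟩
    have h2 : (x 1)^2 ≤ (1+ε)^2 := by
      have := sq_abs (x 1)
      nlinarith [abs_nonneg (x 1)]
    nlinarith [sq_nonneg (x 1), hPb.le]
  -- key exponent identity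
  have hkey : 2 * Pj * Q = Pb * Pb := by
    have e1 : (2:ℝ)^((1:ℝ) + ((j:ℝ)-1) + (2*β-1)*(j:ℝ)) = 2 * Pj * Q := by
      rw [rpow_add_two, rpow_add_two, Real.rpow_one, hPjdef, hQdef]
    have e2 : (2:ℝ)^(β*(j:ℝ) + β*(j:ℝ)) = Pb * Pb := by
      rw [rpow_add_two, hPbdef]
    rw [← e1, ← e2]
    congr 1
    ring
  set W := (16/15) * (1+ε)^2 * Q with hWdef
  have hW : 0 ≤ W := by positivity
  constructor
  · -- lower bound
    have h1 : u ≤ Real.sqrt (u^2 + v^2) := by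
      have := Real.sqrt_le_sqrt (show u^2 ≤ u^2 + v^2 by nlinarith [sq_nonneg v])
      rwa [Real.sqrt_sq hu_pos.le] at this
    linarith
  · -- upper bound
    have hstep : v^2 ≤ 2 * u * W := by
      have h2 : 2 * u * W ≥ 2 * ((15/16) * Pj) * W :=
        by nlinarith [mul_le_mul_of_nonneg_right hu_big hW]
      have h3 : 2 * ((15/16) * Pj) * W = (1+ε)^2 * (Pb * Pb) := by
        rw [hWdef]
        nlinarith [hkey]
      linarith
    have h4 : Real.sqrt (u^2 + v^2) ≤ u + W := by
      rw [show u + W = Real.sqrt ((u+W)^2) from (Real.sqrt_sq (by linarith)).symm]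
      exact Real.sqrt_le_sqrt (by nlinarith [sq_nonneg W])
    linarith [hu_hi]

/-- Counting lemma: a set of naturals inside a real interval of length `< 5`
has at most `5` elements. -/
lemma encard_le_five {S : Set ℕ} {A B : ℝ} (hAB : B < A + 5)
    (h : ∀ n ∈ S, A ≤ (n:ℝ) ∧ (n:ℝ) ≤ B) : S.encard ≤ 5 := by
  classical
  have hsub : S ⊆ ↑((Finset.Icc ⌈A⌉ ⌊B⌋).image Int.toNat) := by
    intro n hn
    obtain ⟨h1, h2⟩ := h n hn
    simp only [Finset.coe_image, Set.mem_image, Finset.mem_coe, Finset.mem_Icc]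
    exact ⟨(n:ℤ), ⟨Int.ceil_le.mpr (by exact_mod_cast h1),
      Int.le_floor.mpr (by exact_mod_cast h2)⟩, Int.toNat_natCast n⟩
  have hle := Set.encard_mono hsub
  rw [Set.encard_coe_eq_coe_finsetCard] at hle
  refine le_trans hle ?_
  have hcard : ((Finset.Icc ⌈A⌉ ⌊B⌋).image Int.toNat).card ≤ 5 := by
    refine le_trans Finset.card_image_le ?_
    rw [Int.card_Icc]
    have hB : (⌊B⌋:ℝ) < (⌈A⌉:ℝ) + 5 :=
      lt_of_le_of_lt (Int.floor_le B) (lt_of_lt_of_le hAB (by linarith [Int.le_ceil A]))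
    have : ⌊B⌋ < ⌈A⌉ + 5 := by exact_mod_cast hB
    omega
  exact_mod_cast hcard

/-- For every `(j,m,ℓ) ∈ I₀` and every `j' ∈ ℕ = {1,2,…}`, there are at
most five values of `m' ∈ ℕ₀` for which there is some `ℓ' ∈ ℕ₀` with
`(j',m',ℓ') ∈ I₀` and `Q_{j,m,ℓ} ∩ Q_{j',m',ℓ'} ≠ ∅`. -/
theorem wavePacket_shift_relation (α β ε : ℝ)
    (hβ0 : 0 ≤ β) (hβα : β ≤ α) (hα1 : α ≤ 1) (hε : ε ∈ Set.Ioo (0:ℝ) (1/32))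
    (j m ℓ : ℕ) (hi : memI0 α β (j, m, ℓ)) (j' : ℕ) (hj' : 1 ≤ j') :
    {m' : ℕ | ∃ ℓ' : ℕ, memI0 α β (j', m', ℓ') ∧
        (Qset α β ε j m ℓ ∩ Qset α β ε j' m' ℓ').Nonempty}.encard ≤ 5 := by
  obtain ⟨hε0, hε1⟩ := hε
  have hα0 : 0 ≤ α := le_trans hβ0 hβα
  obtain ⟨hj, -, -⟩ := hi
  have hj1 : (1:ℝ) ≤ (j:ℝ) := by exact_mod_cast hj
  have hj'1 : (1:ℝ) ≤ (j':ℝ) := by exact_mod_cast hj'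
  -- abbreviations
  set D := (2:ℝ)^(α*(j':ℝ)) with hDdef
  set M := (2:ℝ)^((1-α)*(j':ℝ)-1) with hMdef
  set Pj1 := (2:ℝ)^((j:ℝ)-1) with hPj1def
  set Pj'1 := (2:ℝ)^((j':ℝ)-1) with hPj'1def
  set PaJ := (2:ℝ)^(α*(j:ℝ)) with hPaJdef
  set QJ := (2:ℝ)^((2*β-1)*(j:ℝ)) with hQJdef
  set QJ' := (2:ℝ)^((2*β-1)*(j':ℝ)) with hQJ'def
  set Kc := (16/15) * (1+ε)^2 with hKcdef
  have hD : 0 < D := Real.rpow_pos_of_pos two_pos _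
  have hM : 0 < M := Real.rpow_pos_of_pos two_pos _
  have hPj1 : 0 < Pj1 := Real.rpow_pos_of_pos two_pos _
  have hPj'1 : 0 < Pj'1 := Real.rpow_pos_of_pos two_pos _
  have hPaJ : 0 < PaJ := Real.rpow_pos_of_pos two_pos _
  have hQJ : 0 < QJ := Real.rpow_pos_of_pos two_pos _
  have hQJ' : 0 < QJ' := Real.rpow_pos_of_pos two_pos _
  have hKc0 : 0 < Kc := by rw [hKcdef]; positivity
  clear_value D M Pj1 Pj'1 PaJ QJ QJ' Kc
  have hKcle : Kc ≤ 1089/960 := by rw [hKcdef]; nlinarith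
  have hMD : M * D = Pj'1 := by
    rw [hMdef, hDdef, hPj'1def, ← rpow_add_two]
    congr 1
    ring
  have hQJ'le : QJ' ≤ D := by
    rw [hQJ'def, hDdef]
    apply Real.rpow_le_rpow_of_exponent_le one_le_two
    nlinarith
  -- define the interval endpoints
  set A := (Pj1 + ((m:ℝ)-ε)*PaJ - Pj'1 - Kc*QJ')/D - 1 - ε with hAdef
  set B := min ((Pj1 + ((m:ℝ)+1+ε)*PaJ + Kc*QJ - Pj'1)/D + ε) (M + 1) with hBdef
  apply encard_le_five (A := A) (B := B)
  · -- B < A + 5, by cases on j vs j'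
    rcases le_or_gt j j' with hcase | hcase
    · -- j ≤ j' : use the first component of the min
      have hjj' : (j:ℝ) ≤ (j':ℝ) := by exact_mod_cast hcase
      have hPaJle : PaJ ≤ D := by
        rw [hPaJdef, hDdef]
        apply Real.rpow_le_rpow_of_exponent_le one_le_two
        nlinarith
      have hQJle : QJ ≤ D := by
        rw [hQJdef, hDdef]
        apply Real.rpow_le_rpow_of_exponent_le one_le_two
        rcases le_or_gt (2*β-1) 0 with hb | hb
        · nlinarith
        · nlinarith
      have hnum : ((m:ℝ)+1+ε) * PaJ + Kc*QJ + Kc*QJ' - ((m:ℝ)-ε)*PaJ < (4-2*ε)*D := by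
        have e1 : Kc*QJ ≤ Kc*D := mul_le_mul_of_nonneg_left hQJle hKc0.le
        have e2 : Kc*QJ' ≤ Kc*D := mul_le_mul_of_nonneg_left hQJ'le hKc0.le
        have e3 : Kc*D ≤ (1089/960)*D := mul_le_mul_of_nonneg_right hKcle hD.le
        have e4 : (1+2*ε)*PaJ ≤ (1+2*ε)*D :=
          mul_le_mul_of_nonneg_left hPaJle (by linarith)
        have e5 : ε*D ≤ (1/32)*D := mul_le_mul_of_nonneg_right hε1.le hD.le
        nlinarith
      have h6 : (Pj1 + ((m:ℝ)+1+ε)*PaJ + Kc*QJ - Pj'1)/D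
          - (Pj1 + ((m:ℝ)-ε)*PaJ - Pj'1 - Kc*QJ')/D < 4 - 2*ε := by
        rw [div_sub_div_same, div_lt_iff₀ hD]
        nlinarith [hnum]
      calc B ≤ (Pj1 + ((m:ℝ)+1+ε)*PaJ + Kc*QJ - Pj'1)/D + ε := min_le_left _ _
        _ < A + 5 := by rw [hAdef]; linarith
    · -- j' < j : use the second component of the min
      have hjj' : (j':ℝ) + 1 ≤ (j:ℝ) := by exact_mod_cast hcase
      have hm0 : (0:ℝ) ≤ (m:ℝ) := Nat.cast_nonneg m
      have hmPaJ : (0:ℝ) ≤ (m:ℝ) * PaJ := mul_nonneg hm0 hPaJ.le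
      have hKQ' : Kc*QJ' ≤ (1089/960)*D :=
        le_trans (mul_le_mul_of_nonneg_left hQJ'le hKc0.le)
          (mul_le_mul_of_nonneg_right hKcle hD.le)
      have hεD : ε*D ≤ (1/32)*D := mul_le_mul_of_nonneg_right hε1.le hD.le
      have hPj'full : (2:ℝ)^((j':ℝ)) = 2*Pj'1 := by
        rw [hPj'1def, show (2:ℝ) * (2:ℝ)^((j':ℝ)-1) = (2:ℝ)^(1:ℝ) * (2:ℝ)^((j':ℝ)-1) by
          rw [Real.rpow_one], ← rpow_add_two]
        congr 1
        ring
      have hkey : (M + 1 - 4 + ε) * D < Pj1 + ((m:ℝ)-ε)*PaJ - Pj'1 - Kc*QJ' := by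
        have hMDe : (M + 1 - 4 + ε) * D = Pj'1 + (ε - 3)*D := by
          rw [show (M + 1 - 4 + ε) * D = M*D + (ε-3)*D by ring, hMD]
        rw [hMDe]
        -- suffices: 2*Pj'1 + ε*PaJ + Kc*QJ' < Pj1 + (3-ε)*D
        rcases eq_or_lt_of_le hjj' with heq | hlt
        · -- j = j'+1
          have hPaJD : PaJ = D * (2:ℝ)^α := by
            rw [hPaJdef, hDdef, ← rpow_add_two]
            congr 1
            rw [← heq]
            ring
          have h2a : (2:ℝ)^α ≤ 2 := by
            calc (2:ℝ)^α ≤ (2:ℝ)^(1:ℝ) :=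
                  Real.rpow_le_rpow_of_exponent_le one_le_two hα1
              _ = 2 := Real.rpow_one 2
          have hεPaJ : ε*PaJ ≤ 2*(ε*D) := by
            rw [hPaJD]
            nlinarith [mul_le_mul_of_nonneg_left h2a (mul_nonneg hε0.le hD.le)]
          have hPj1e : Pj1 = 2*Pj'1 := by
            rw [hPj1def, show (j:ℝ)-1 = (j':ℝ) by linarith, hPj'full]
          nlinarith
        · -- j ≥ j'+2
          have hjj2 : (j':ℝ) + 2 ≤ (j:ℝ) := by
            have : j' + 1 < j := by exact_mod_cast hlt
            have : j' + 2 ≤ j := this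
            exact_mod_cast this
          have h4 : (2:ℝ)^(2:ℝ) = 4 := by
            have := Real.rpow_natCast (2:ℝ) 2
            push_cast at this
            rw [this]
            norm_num
          have hPj14 : 4*Pj'1 ≤ Pj1 := by
            have e : (2:ℝ)^(((j':ℝ)-1)+2) = Pj'1 * 4 := by
              rw [rpow_add_two, h4, hPj'1def]
            have mono : (2:ℝ)^(((j':ℝ)-1)+2) ≤ (2:ℝ)^((j:ℝ)-1) :=
              Real.rpow_le_rpow_of_exponent_le one_le_two (by linarith)
            rw [e] at mono
            rw [hPj1def]
            linarith
          have hPjfull : (2:ℝ)^((j:ℝ)) = 2*Pj1 := by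
            rw [hPj1def, show (2:ℝ) * (2:ℝ)^((j:ℝ)-1) = (2:ℝ)^(1:ℝ) * (2:ℝ)^((j:ℝ)-1) by
              rw [Real.rpow_one], ← rpow_add_two]
            congr 1
            ring
          have hPaJle2 : PaJ ≤ 2*Pj1 := by
            rw [← hPjfull, hPaJdef]
            apply Real.rpow_le_rpow_of_exponent_le one_le_two
            nlinarith
          have hεPaJ : ε*PaJ ≤ 2*(ε*Pj1) :=
            by nlinarith [mul_le_mul_of_nonneg_left hPaJle2 hε0.le]
          have hεPj1 : ε*Pj1 ≤ (1/32)*Pj1 := mul_le_mul_of_nonneg_right hε1.le hPj1.le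
          nlinarith
      have h7 : M + 1 - 4 + ε < (Pj1 + ((m:ℝ)-ε)*PaJ - Pj'1 - Kc*QJ')/D :=
        (lt_div_iff₀ hD).mpr hkey
      calc B ≤ M + 1 := min_le_right _ _
        _ < A + 5 := by rw [hAdef]; linarith
  · -- membership bounds
    rintro n ⟨ℓ', hmem', p, hp, hp'⟩
    have hnM : (n:ℝ) ≤ M + 1 := by
      have h1 : ((n:ℤ):ℝ) ≤ ((mjmax α j'):ℝ) := by exact_mod_cast hmem'.2.1
      have h2 : ((⌈(2:ℝ)^((1-α)*(j':ℝ)-1)⌉:ℤ):ℝ) < (2:ℝ)^((1-α)*(j':ℝ)-1) + 1 :=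
        Int.ceil_lt_add_one _
      rw [mjmax] at h1
      push_cast at h1
      rw [hMdef]
      linarith
    obtain ⟨lo1, hi1⟩ := norm_mem hβ0 hβα hα1 hε0 hε1 hj hp
    obtain ⟨lo2, hi2⟩ := norm_mem hβ0 hβα hα1 hε0 hε1 hj' hp'
    rw [← hPj1def, ← hPaJdef] at lo1
    rw [← hPj1def, ← hPaJdef, ← hQJdef, ← hKcdef] at hi1
    rw [← hPj'1def, ← hDdef] at lo2
    rw [← hPj'1def, ← hDdef, ← hQJ'def, ← hKcdef] at hi2
    constructor
    · -- lower bound A ≤ n, from lo1 ≤ ‖p‖ ≤ hi2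
      rw [hAdef]
      have key : Pj1 + ((m:ℝ)-ε)*PaJ - Pj'1 - Kc*QJ' ≤ ((n:ℝ)+1+ε)*D := by
        linarith
      have := (div_le_iff₀ hD).mpr key
      linarith
    · -- upper bound n ≤ B
      rw [hBdef]
      refine le_min ?_ hnM
      have key : ((n:ℝ)-ε)*D ≤ Pj1 + ((m:ℝ)+1+ε)*PaJ + Kc*QJ - Pj'1 := by
        linarith
      have := (le_div_iff₀ hD).mpr key
      linarith
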